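/- Let (α_k) be a nonnegative real sequence with Σ_{k≥1} α_k² < ∞, and let (τ_n^{(w)}) be nonnegative integer-valued random variables on a probability space, all dominated almost surely by an integer-valued random variable τ with E[τ²] < ∞. Then E[Σ_{n≥1} τ_n^{(w)} Σ_{k=n-τ_n^{(w)}}^{n-1} α_k²] ≤ E[τ²] · Σ_{k≥1} α_k², and in particular the random series Σ_{n≥1} τ_n^{(w)} Σ_{k=n-τ_n^{(w)}}^{n-1} α_k² is finite almost surely. -/
import Mathlib


open MeasureTheory ENNReal

lemma aux_pointwise (α : ℕ → ℝ) (hα : ∀ k, 0 ≤ α k) (hsum : Summable (fun k => α k ^ 2))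
    (s : ℕ → ℕ) (t : ℕ) (hs : ∀ n, s n ≤ t) :
    (∑' n : ℕ, (s (n + 1) : ℝ≥0∞) *
        ∑ k ∈ Finset.Ico (max 1 ((n + 1) - s (n + 1))) (n + 1), ENNReal.ofReal (α k ^ 2))
      ≤ (t : ℝ≥0∞) ^ 2 * ENNReal.ofReal (∑' k, α k ^ 2) := by
  set x : ℕ → ℝ≥0∞ := fun k => ENNReal.ofReal (α k ^ 2) with hx
  have hxsum : ∑' k, x k = ENNReal.ofReal (∑' k, α k ^ 2) :=
    (ENNReal.ofReal_tsum_of_nonneg (fun k => sq_nonneg _) hsum).symm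
  have step1 : ∀ n : ℕ, (s (n + 1) : ℝ≥0∞) *
      ∑ k ∈ Finset.Ico (max 1 ((n + 1) - s (n + 1))) (n + 1), x k
      ≤ (t : ℝ≥0∞) * ∑ k ∈ Finset.Ico (max 1 ((n + 1) - t)) (n + 1), x k := by
    intro n
    refine mul_le_mul' (by exact_mod_cast hs (n+1)) ?_
    refine Finset.sum_le_sum_of_subset ?_
    apply Finset.Ico_subset_Ico _ le_rfl
    exact max_le_max le_rfl (Nat.sub_le_sub_left (hs (n+1)) _)
  have inner : ∑' n : ℕ, ∑ k ∈ Finset.Ico (max 1 ((n + 1) - t)) (n + 1), x k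
      ≤ (t : ℝ≥0∞) * ∑' k, x k := by
    have key : ∀ n : ℕ, ∑ k ∈ Finset.Ico (max 1 ((n + 1) - t)) (n + 1), x k
        = ∑' k : ℕ, (if k ∈ Finset.Ico (max 1 ((n + 1) - t)) (n + 1) then x k else 0) := by
      intro n
      rw [tsum_eq_sum (s := Finset.Ico (max 1 ((n + 1) - t)) (n + 1))
        (fun b hb => by simp [hb])]
      exact Finset.sum_congr rfl fun k hk => by simp [hk]
    calc ∑' n : ℕ, ∑ k ∈ Finset.Ico (max 1 ((n + 1) - t)) (n + 1), x k
        = ∑' (n : ℕ) (k : ℕ),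
            (if k ∈ Finset.Ico (max 1 ((n + 1) - t)) (n + 1) then x k else 0) :=
          tsum_congr key
      _ = ∑' (k : ℕ) (n : ℕ),
            (if k ∈ Finset.Ico (max 1 ((n + 1) - t)) (n + 1) then x k else 0) :=
          ENNReal.tsum_comm
      _ ≤ ∑' (k : ℕ), (t : ℝ≥0∞) * x k := ?_
      _ = (t : ℝ≥0∞) * ∑' k, x k := ENNReal.tsum_mul_left
    refine ENNReal.tsum_le_tsum fun k => ?_
    calc ∑' n : ℕ, (if k ∈ Finset.Ico (max 1 ((n + 1) - t)) (n + 1) then x k else 0)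
        ≤ ∑' n : ℕ, (if n ∈ Finset.Ico k (k + t) then x k else 0) := by
          refine ENNReal.tsum_le_tsum fun n => ?_
          by_cases h : k ∈ Finset.Ico (max 1 ((n + 1) - t)) (n + 1)
          · have hk : n ∈ Finset.Ico k (k + t) := by
              simp only [Finset.mem_Ico, max_le_iff] at h ⊢
              omega
            simp [h, hk]
          · simp [h]
      _ = ∑ n ∈ Finset.Ico k (k + t), x k := by
          rw [tsum_eq_sum (s := Finset.Ico k (k + t)) (fun b hb => by simp [hb])]
          exact Finset.sum_congr rfl fun n hn => by simp [hn]
      _ = (t : ℝ≥0∞) * x k := by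
          rw [Finset.sum_const, Nat.card_Ico]
          simp [nsmul_eq_mul]
  calc (∑' n : ℕ, (s (n + 1) : ℝ≥0∞) *
          ∑ k ∈ Finset.Ico (max 1 ((n + 1) - s (n + 1))) (n + 1), x k)
      ≤ ∑' n : ℕ, (t : ℝ≥0∞) * ∑ k ∈ Finset.Ico (max 1 ((n + 1) - t)) (n + 1), x k :=
        ENNReal.tsum_le_tsum step1
    _ = (t : ℝ≥0∞) * ∑' n : ℕ, ∑ k ∈ Finset.Ico (max 1 ((n + 1) - t)) (n + 1), x k :=
        ENNReal.tsum_mul_left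
    _ ≤ (t : ℝ≥0∞) * ((t : ℝ≥0∞) * ∑' k, x k) := mul_le_mul' le_rfl inner
    _ = (t : ℝ≥0∞) ^ 2 * ENNReal.ofReal (∑' k, α k ^ 2) := by
        rw [hxsum]; ring

theorem stmt_6 {Ω : Type*} [MeasurableSpace Ω] (P : Measure Ω) [IsProbabilityMeasure P]
    (α : ℕ → ℝ) (hα : ∀ k, 0 ≤ α k) (hsum : Summable (fun k => α k ^ 2))
    (τn : ℕ → Ω → ℕ) (hτn : ∀ n, Measurable (τn n))
    (τ : Ω → ℕ) (hτ : Measurable τ)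
    (hdom : ∀ n, ∀ᵐ ω ∂P, τn n ω ≤ τ ω)
    (hτ2 : ∫⁻ ω, ((τ ω : ℝ≥0∞)) ^ 2 ∂P < ⊤) :
    (∫⁻ ω, ∑' n : ℕ, (τn (n + 1) ω : ℝ≥0∞) *
        ∑ k ∈ Finset.Ico (max 1 ((n + 1) - τn (n + 1) ω)) (n + 1),
          ENNReal.ofReal (α k ^ 2) ∂P)
      ≤ (∫⁻ ω, ((τ ω : ℝ≥0∞)) ^ 2 ∂P) * ENNReal.ofReal (∑' k, α k ^ 2) ∧
    (∀ᵐ ω ∂P, (∑' n : ℕ, (τn (n + 1) ω : ℝ≥0∞) *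
        ∑ k ∈ Finset.Ico (max 1 ((n + 1) - τn (n + 1) ω)) (n + 1),
          ENNReal.ofReal (α k ^ 2)) < ⊤) := by
  set c := ENNReal.ofReal (∑' k, α k ^ 2) with hc
  set F : Ω → ℝ≥0∞ := fun ω => ∑' n : ℕ, (τn (n + 1) ω : ℝ≥0∞) *
      ∑ k ∈ Finset.Ico (max 1 ((n + 1) - τn (n + 1) ω)) (n + 1),
        ENNReal.ofReal (α k ^ 2) with hF
  have hmeas : Measurable F := by
    apply Measurable.ennreal_tsum
    intro n
    have h : Measurable (fun m : ℕ => (m : ℝ≥0∞) *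
        ∑ k ∈ Finset.Ico (max 1 ((n + 1) - m)) (n + 1), ENNReal.ofReal (α k ^ 2)) :=
      measurable_from_top
    exact h.comp (hτn (n + 1))
  have hae : ∀ᵐ ω ∂P, ∀ n, τn n ω ≤ τ ω := ae_all_iff.mpr hdom
  have hbound : ∀ᵐ ω ∂P, F ω ≤ (τ ω : ℝ≥0∞) ^ 2 * c := by
    filter_upwards [hae] with ω hω
    exact aux_pointwise α hα hsum (fun n => τn n ω) (τ ω) hω
  have h1 : ∫⁻ ω, F ω ∂P ≤ ∫⁻ ω, (τ ω : ℝ≥0∞) ^ 2 * c ∂P := lintegral_mono_ae hbound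
  have hτm : Measurable (fun ω => ((τ ω : ℝ≥0∞)) ^ 2) := by
    exact (measurable_from_top (f := fun m : ℕ => ((m : ℝ≥0∞)) ^ 2)).comp hτ
  have h2 : ∫⁻ ω, (τ ω : ℝ≥0∞) ^ 2 * c ∂P = (∫⁻ ω, ((τ ω : ℝ≥0∞)) ^ 2 ∂P) * c :=
    lintegral_mul_const c hτm
  have hmain : ∫⁻ ω, F ω ∂P ≤ (∫⁻ ω, ((τ ω : ℝ≥0∞)) ^ 2 ∂P) * c := h1.trans h2.le
  refine ⟨hmain, ?_⟩
  have hlt : ∫⁻ ω, F ω ∂P < ⊤ :=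
    lt_of_le_of_lt hmain (ENNReal.mul_lt_top hτ2 ofReal_lt_top)
  exact ae_lt_top hmeas hlt.ne
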